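/- Consider the planar linear system p' = α₁·p, b' = α₂·p + α₃·b with real constants satisfying α₂ < 0 and α₁ < α₃ < 0 (Case I). Then every initial condition with p(0) > 0 and b(0) < 0 gives a solution with p(ŝ) > 0 and b(ŝ) < 0 for all ŝ ≥ 0, and (p(ŝ), b(ŝ)) → (0,0) with b(ŝ)/p(ŝ) → -∞ as ŝ → ∞. -/

import Mathlib

open Filter Real

lemma ode_exp (a : ℝ) (f : ℝ → ℝ) (hf : ∀ s, HasDerivAt f (a * f s) s) :
    ∀ s, f s = f 0 * Real.exp (a * s) := by
  intro s
  have hg : ∀ t, HasDerivAt (fun t => f t * Real.exp (-a * t)) 0 t := by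
    intro t
    have h1 : HasDerivAt (fun t => f t * Real.exp (-a * t)) _ t := (hf t).mul (((hasDerivAt_id t).const_mul (-a)).exp)
    convert h1 using 1
    simp; ring
  have hc : f s * Real.exp (-a * s) = f 0 * Real.exp (-a * 0) :=
    is_const_of_deriv_eq_zero (fun x => (hg x).differentiableAt)
      (fun x => (hg x).deriv) s 0
  have hne := Real.exp_ne_zero (a * s)
  field_simp [Real.exp_neg] at hc ⊢
  have h2 : Real.exp (-(a * s)) * Real.exp (a * s) = 1 := by rw [← Real.exp_add]; simp
  simp only [mul_zero, neg_zero, Real.exp_zero, mul_one] at hc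
  calc f s = f s * Real.exp (-(a * s)) * Real.exp (a * s) := by rw [mul_assoc, h2, mul_one]
    _ = _ := by rw [hc]

theorem caseI_dynamic_jam
    (α₁ α₂ α₃ : ℝ) (h₂ : α₂ < 0) (h₁₃ : α₁ < α₃) (h₃ : α₃ < 0)
    (p b : ℝ → ℝ)
    (hp : ∀ s : ℝ, HasDerivAt p (α₁ * p s) s)
    (hb : ∀ s : ℝ, HasDerivAt b (α₂ * p s + α₃ * b s) s)
    (hp0 : 0 < p 0) (hb0 : b 0 < 0) :
    (∀ s : ℝ, 0 ≤ s → 0 < p s ∧ b s < 0) ∧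
    Tendsto (fun s => (p s, b s)) atTop (nhds (0, 0)) ∧
    Tendsto (fun s => b s / p s) atTop atBot := by
  have hpe : ∀ s, p s = p 0 * Real.exp (α₁ * s) := ode_exp α₁ p hp
  set c : ℝ := α₂ * p 0 / (α₁ - α₃) with hcdef
  have hd : α₁ - α₃ ≠ 0 := by linarith
  have hcpos : 0 < c := div_pos_of_neg_of_neg (by nlinarith) (by linarith)
  set B : ℝ → ℝ := fun s => (b 0 - c) * Real.exp (α₃ * s) + c * Real.exp (α₁ * s) with hBdef
  have hBderiv : ∀ s, HasDerivAt B (α₂ * p s + α₃ * B s) s := by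
    intro s
    have h1 : HasDerivAt B ((b 0 - c) * (α₃ * Real.exp (α₃ * s)) + c * (α₁ * Real.exp (α₁ * s))) s := by
      apply HasDerivAt.add
      · exact (((hasDerivAt_id s).const_mul α₃).exp.const_mul _).congr_deriv (by simp only [id_eq]; ring)
      · exact (((hasDerivAt_id s).const_mul α₁).exp.const_mul _).congr_deriv (by simp only [id_eq]; ring)
    convert h1 using 1
    rw [hpe s]
    have : c * (α₁ - α₃) = α₂ * p 0 := by rw [hcdef]; field_simp
    simp only [hBdef]
    nlinarith [Real.exp_pos (α₁ * s), Real.exp_pos (α₃ * s)]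
  have hbB : ∀ s, b s = B s := by
    intro s
    have hh : ∀ t, HasDerivAt (fun t => b t - B t) (α₃ * (b t - B t)) t := by
      intro t
      have this : HasDerivAt (fun t => b t - B t) _ t := (hb t).sub (hBderiv t)
      convert this using 1; ring
    have key := ode_exp α₃ (fun t => b t - B t) hh s
    have hB0 : B 0 = b 0 := by simp [hBdef]
    replace key : b s - B s = (b 0 - B 0) * Real.exp (α₃ * s) := key
    rw [hB0, sub_self, zero_mul] at key
    linarith
  have hexp_le : ∀ s : ℝ, 0 ≤ s → Real.exp (α₁ * s) ≤ Real.exp (α₃ * s) := by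
    intro s hs
    exact Real.exp_le_exp.mpr (by nlinarith)
  refine ⟨?_, ?_, ?_⟩
  · intro s hs
    constructor
    · rw [hpe s]; positivity
    · rw [hbB s]
      have h1 : B s = b 0 * Real.exp (α₃ * s) + c * (Real.exp (α₁ * s) - Real.exp (α₃ * s)) := by
        simp only [hBdef]; ring
      rw [h1]
      have := hexp_le s hs
      nlinarith [Real.exp_pos (α₃ * s)]
  · have h1 : Tendsto (fun s => Real.exp (α₁ * s)) atTop (nhds 0) := by
      rw [Real.tendsto_exp_comp_nhds_zero]
      exact (tendsto_const_mul_atBot_of_neg (by linarith : α₁ < 0)).mpr tendsto_id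
    have h3 : Tendsto (fun s => Real.exp (α₃ * s)) atTop (nhds 0) := by
      rw [Real.tendsto_exp_comp_nhds_zero]
      exact (tendsto_const_mul_atBot_of_neg (by linarith : α₃ < 0)).mpr tendsto_id
    have hptend : Tendsto p atTop (nhds 0) := by
      have := h1.const_mul (p 0)
      simp at this
      exact Tendsto.congr (fun s => (hpe s).symm) this
    have hbtend : Tendsto b atTop (nhds 0) := by
      have := (h3.const_mul (b 0 - c)).add (h1.const_mul c)
      simp at this
      exact Tendsto.congr (fun s => (hbB s).symm) this
    exact hptend.prodMk_nhds hbtend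
  · have hratio : ∀ s : ℝ, b s / p s = (b 0 - c) / p 0 * Real.exp ((α₃ - α₁) * s) + c / p 0 := by
      intro s
      rw [hbB s, hpe s]
      simp only [hBdef]
      rw [show (α₃ - α₁) * s = α₃ * s - α₁ * s by ring, Real.exp_sub]
      field_simp
    rw [show (fun s => b s / p s) = fun s => (b 0 - c) / p 0 * Real.exp ((α₃ - α₁) * s) + c / p 0 from funext hratio]
    apply tendsto_atBot_add_const_right
    have hexp : Tendsto (fun s => Real.exp ((α₃ - α₁) * s)) atTop atTop := by
      apply Real.tendsto_exp_atTop.comp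
      exact Tendsto.const_mul_atTop (by linarith) tendsto_id
    have hneg : (b 0 - c) / p 0 < 0 := div_neg_of_neg_of_pos (by linarith) hp0
    exact Tendsto.const_mul_atTop_of_neg hneg hexp
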